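/- arXiv:1010.0602 — 2 statements merged into one kernel-verified Lean document; each statement's English description precedes it below -/
import Mathlib

section
/- Suppose f is a characteristic function such that for every c in some left neighborhood (a,1) of 1 (with 0 < a < 1) the function f_c(t) = f(t)/f(ct) is a characteristic function. Then f is self-decomposable, i.e., f_c is a characteristic function for every c ∈ (0,1). -/
open MeasureTheory Set Filter

/-- `f` is the characteristic function of a probability measure on `ℝ`. -/
def IsCF (f : ℝ → ℂ) : Prop :=
  ∃ μ : Measure ℝ, IsProbabilityMeasure μ ∧
    ∀ t : ℝ, f t = ∫ x, Complex.exp (Complex.I * t * x) ∂μ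

/-- `P` is the probability generating function of a distribution on `ℕ`. -/
def IsPGF (P : ℝ → ℝ) : Prop :=
  ∃ q : ℕ → ℝ, (∀ n, 0 ≤ q n) ∧ (∑' n, q n) = 1 ∧
    ∀ s ∈ Set.Icc (0:ℝ) 1, P s = ∑' n, q n * s ^ n

/-- `φ` is the Laplace transform of a probability measure on `[0,∞)`. -/
def IsLT (φ : ℝ → ℝ) : Prop :=
  ∃ μ : Measure ℝ, IsProbabilityMeasure μ ∧ μ (Set.Iio 0) = 0 ∧
    ∀ s : ℝ, 0 ≤ s → φ s = ∫ x, Real.exp (-s * x) ∂μ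
lemma cf_integrable (μ : Measure ℝ) [IsProbabilityMeasure μ] (t : ℝ) :
    Integrable (fun x : ℝ => Complex.exp (Complex.I * t * x)) μ := by
  apply Integrable.mono' (integrable_const (1:ℝ))
  · exact (Complex.continuous_exp.comp (by continuity)).aestronglyMeasurable
  · filter_upwards with x
    have : Complex.I * t * x = (t * x : ℝ) * Complex.I := by push_cast; ring
    rw [this]
    simp [Complex.norm_exp]


lemma IsCF.apply_zero {f : ℝ → ℂ} (hf : IsCF f) : f 0 = 1 := by
  obtain ⟨μ, hμ, hrep⟩ := hf
  simp [hrep 0]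

lemma IsCF.norm_le_one {f : ℝ → ℂ} (hf : IsCF f) (t : ℝ) : ‖f t‖ ≤ 1 := by
  obtain ⟨μ, hμ, hrep⟩ := hf
  rw [hrep t]
  calc ‖∫ x, Complex.exp (Complex.I * t * x) ∂μ‖
      ≤ ∫ x, ‖Complex.exp (Complex.I * t * x)‖ ∂μ := norm_integral_le_integral_norm _
    _ ≤ 1 := by
        have : ∀ x : ℝ, ‖Complex.exp (Complex.I * t * x)‖ = 1 := by
          intro x
          have : Complex.I * t * x = (t * x : ℝ) * Complex.I := by push_cast; ring
          rw [this]; simp [Complex.norm_exp]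
        simp [this]

lemma IsCF.continuous {f : ℝ → ℂ} (hf : IsCF f) : Continuous f := by
  obtain ⟨μ, hμ, hrep⟩ := hf
  have : Continuous fun t : ℝ => ∫ x, Complex.exp (Complex.I * t * x) ∂μ := by
    apply continuous_of_dominated (bound := fun _ => (1:ℝ))
    · exact fun t => (Complex.continuous_exp.comp (by continuity)).aestronglyMeasurable
    · intro t
      filter_upwards with x
      have : Complex.I * t * x = (t * x : ℝ) * Complex.I := by push_cast; ring
      rw [this]; simp [Complex.norm_exp]
    · exact integrable_const 1
    · filter_upwards with x
      exact Complex.continuous_exp.comp (by continuity)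
  exact this.congr fun t => (hrep t).symm

lemma IsCF.re_ineq {f : ℝ → ℂ} (hf : IsCF f) (t : ℝ) :
    1 - (f (2 * t)).re ≤ 4 * (1 - (f t).re) := by
  obtain ⟨μ, hμ, hrep⟩ := hf
  have key : ∀ s : ℝ, (f s).re = ∫ x, Real.cos (s * x) ∂μ := by
    intro s
    rw [hrep s, ← RCLike.re_to_complex, ← integral_re (cf_integrable μ s)]
    congr 1; funext x
    have : Complex.I * s * x = (s * x : ℝ) * Complex.I := by push_cast; ring
    rw [this, RCLike.re_to_complex, Complex.exp_ofReal_mul_I_re]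
  have h1 : Integrable (fun x => Real.cos (t * x)) μ := by
    apply Integrable.mono' (integrable_const (1:ℝ))
    · exact (Real.continuous_cos.comp (by continuity)).aestronglyMeasurable
    · filter_upwards with x; simp [abs_le]; constructor
      · exact Real.neg_one_le_cos _
      · exact Real.cos_le_one _
  have h2 : Integrable (fun x => Real.cos (2 * t * x)) μ := by
    apply Integrable.mono' (integrable_const (1:ℝ))
    · exact (Real.continuous_cos.comp (by continuity)).aestronglyMeasurable
    · filter_upwards with x; simp [abs_le]; constructor
      · exact Real.neg_one_le_cos _
      · exact Real.cos_le_one _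
  rw [key, key]
  have hμuniv : (μ Set.univ).toReal = 1 := by simp
  have e1 : 1 - ∫ x, Real.cos (2 * t * x) ∂μ = ∫ x, (1 - Real.cos (2 * t * x)) ∂μ := by
    rw [integral_sub (integrable_const 1) h2]; simp
  have e2 : 4 * (1 - ∫ x, Real.cos (t * x) ∂μ) = ∫ x, 4 * (1 - Real.cos (t * x)) ∂μ := by
    rw [integral_const_mul, integral_sub (integrable_const 1) h1]; simp
  rw [e1, e2]
  have h2' : Integrable (fun x => 1 - Real.cos (2 * t * x)) μ := by
    exact (integrable_const 1).sub h2
  have h1' : Integrable (fun x => 4 * (1 - Real.cos (t * x))) μ := by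
    exact ((integrable_const 1).sub h1).const_mul 4
  apply integral_mono h2' h1'
  intro x
  dsimp only
  have hc : Real.cos (2 * t * x) = 2 * Real.cos (t * x) ^ 2 - 1 := by
    rw [mul_assoc, Real.cos_two_mul]
  simp only [hc]
  nlinarith [Real.neg_one_le_cos (t * x), Real.cos_le_one (t * x)]

lemma IsCF.mul {f g : ℝ → ℂ} (hf : IsCF f) (hg : IsCF g) : IsCF (fun t => f t * g t) := by
  obtain ⟨μ, hμ, hfr⟩ := hf
  obtain ⟨ν, hν, hgr⟩ := hg
  refine ⟨Measure.map (fun p : ℝ × ℝ => p.1 + p.2) (μ.prod ν), ?_, ?_⟩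
  · exact Measure.isProbabilityMeasure_map (measurable_fst.add measurable_snd).aemeasurable
  · intro t
    rw [integral_map (μ := μ.prod ν) (φ := fun p : ℝ × ℝ => p.1 + p.2) (measurable_fst.add measurable_snd).aemeasurable
      (Continuous.aestronglyMeasurable (by continuity :
        Continuous fun x : ℝ => Complex.exp (Complex.I * t * x)))]
    have : ∀ p : ℝ × ℝ, Complex.exp (Complex.I * t * (p.1 + p.2 : ℝ)) =
        Complex.exp (Complex.I * t * p.1) * Complex.exp (Complex.I * t * p.2) := by
      intro p; rw [← Complex.exp_add]; congr 1; push_cast; ring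
    simp_rw [this]
    rw [integral_prod_mul (fun x : ℝ => Complex.exp (Complex.I * t * x))
      (fun y : ℝ => Complex.exp (Complex.I * t * y)), ← hfr, ← hgr]

lemma IsCF.comp_mul {f : ℝ → ℂ} (hf : IsCF f) (b : ℝ) : IsCF (fun t => f (b * t)) := by
  obtain ⟨μ, hμ, hfr⟩ := hf
  refine ⟨Measure.map (fun x : ℝ => b * x) μ, ?_, ?_⟩
  · exact Measure.isProbabilityMeasure_map (measurable_const_mul b).aemeasurable
  · intro t
    rw [integral_map (μ := μ) (measurable_const_mul b).aemeasurable
      (Continuous.aestronglyMeasurable (by continuity :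
        Continuous fun x : ℝ => Complex.exp (Complex.I * t * x)))]
    show f (b * t) = _
    rw [hfr (b * t)]
    congr 1; funext x; congr 1; push_cast; ring

lemma cf_symm {f : ℝ → ℂ} (hf : IsCF f) (t : ℝ) : f (-t) = (starRingEnd ℂ) (f t) := by
  obtain ⟨μ, hμ, hrep⟩ := hf
  rw [hrep, hrep, ← integral_conj]
  congr 1; funext x
  rw [← Complex.exp_conj]
  congr 1
  simp [map_mul, Complex.conj_I]

lemma cf_nonvanish (f : ℝ → ℂ) (a : ℝ) (ha : a ∈ Set.Ioo (0:ℝ) 1) (hf : IsCF f)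
    (h : ∀ c ∈ Set.Ioo a 1, IsCF (fun t => f t / f (c * t))) (t : ℝ) : f t ≠ 0 := by
  by_contra hz
  have hfc := hf.continuous
  have hf0 : f 0 = 1 := hf.apply_zero
  have ht0 : t ≠ 0 := by rintro rfl; rw [hf0] at hz; norm_num at hz
  set S : Set ℝ := {s | 0 < s ∧ f s = 0} with hS
  have hSne : S.Nonempty := by
    rcases lt_or_gt_of_ne ht0 with hlt | hgt
    · refine ⟨-t, by linarith, ?_⟩
      have := cf_symm hf (-t)
      rw [neg_neg] at this
      rw [this] at hz
      simpa using congrArg (starRingEnd ℂ) hz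
    · exact ⟨t, hgt, hz⟩
  have hSbdd : BddBelow S := ⟨0, fun s hs => hs.1.le⟩
  set t0 := sInf S with ht0def
  have ht0mem : f t0 = 0 := by
    have h1 : t0 ∈ closure S := csInf_mem_closure hSne hSbdd
    have h2 : IsClosed {s : ℝ | f s = 0} := isClosed_eq hfc continuous_const
    exact closure_minimal (fun s (hs : s ∈ S) => hs.2) h2 h1
  -- t0 > 0
  have hUopen : IsOpen {s : ℝ | f s ≠ 0} := isOpen_compl_iff.mpr (isClosed_eq hfc continuous_const)
  obtain ⟨δ, hδpos, hδ⟩ := Metric.isOpen_iff.mp hUopen 0 (by simp [hf0])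
  have ht0pos : 0 < t0 := by
    have : δ ≤ t0 := le_csInf hSne fun s hs => by
      by_contra hlt
      push_neg at hlt
      exact hδ (by simp [Metric.mem_ball, Real.dist_eq, abs_of_pos hs.1]; linarith) hs.2
    linarith
  have hlt : ∀ s, 0 ≤ s → s < t0 → f s ≠ 0 := by
    intro s hs0 hst hzero
    rcases eq_or_lt_of_le hs0 with rfl | hpos
    · rw [hf0] at hzero; norm_num at hzero
    · exact absurd (csInf_le hSbdd ⟨hpos, hzero⟩) (not_le.mpr hst)
  have hne : f (t0 / 2) ≠ 0 := hlt _ (by positivity) (by linarith)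
  -- continuity of g at 1
  set g : ℝ → ℝ := fun c => (f (t0 / (2 * c)) / f (t0 / 2)).re with hgdef
  have hg1 : g 1 = 1 := by simp [hgdef, div_self hne]
  have hgc : ContinuousAt g 1 := by
    have c1 : ContinuousAt (fun c : ℝ => t0 / (2 * c)) 1 :=
      ContinuousAt.div continuousAt_const (by fun_prop) (by norm_num)
    have c2 : ContinuousAt (fun c : ℝ => f (t0 / (2 * c))) 1 := hfc.continuousAt.comp c1
    have c3 : ContinuousAt (fun c : ℝ => f (t0 / (2 * c)) / f (t0 / 2)) 1 :=
      c2.div continuousAt_const hne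
    exact Complex.continuous_re.continuousAt.comp c3
  obtain ⟨ε, hεpos, hε⟩ := Metric.continuousAt_iff.mp hgc (1/4) (by norm_num)
  set m : ℝ := max (max a (1/2)) (1 - ε) with hmdef
  have hm1 : m < 1 := by
    apply max_lt (max_lt ha.2 (by norm_num)) (by linarith)
  set c : ℝ := (m + 1) / 2 with hcdef
  have hmc : m < c := by rw [hcdef]; linarith
  have hc1 : c < 1 := by rw [hcdef]; linarith
  have hac : a < c := lt_of_le_of_lt (le_max_of_le_left (le_max_left _ _)) hmc
  have hchalf : (1:ℝ)/2 < c := lt_of_le_of_lt (le_max_of_le_left (le_max_right _ _)) hmc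
  have hc0 : c ≠ 0 := by positivity
  have hgclose : |g c - 1| < 1/4 := by
    rw [hg1] at hε
    apply hε
    rw [Real.dist_eq, abs_of_nonpos (by linarith)]
    have : 1 - ε ≤ m := le_max_right _ _
    linarith
  have hgbig : 3/4 < g c := by
    rcases abs_lt.mp hgclose with ⟨h1, _⟩
    linarith
  -- the inequality
  have hcf := h c ⟨hac, hc1⟩
  have I := hcf.re_ineq (t0 / (2 * c))
  have e1 : c * (2 * (t0 / (2 * c))) = t0 := by field_simp
  have e2 : c * (t0 / (2 * c)) = t0 / 2 := by field_simp
  rw [e1, e2, ht0mem, div_zero] at I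
  simp only [Complex.zero_re] at I
  have : g c ≤ 3/4 := by rw [hgdef]; dsimp only; linarith
  linarith


/-- SD need only be checked on a left neighbourhood of 1. -/
theorem sd_from_left_neighbourhood (f : ℝ → ℂ) (a : ℝ) (ha : a ∈ Set.Ioo (0:ℝ) 1)
    (hf : IsCF f)
    (h : ∀ c ∈ Set.Ioo a 1, IsCF (fun t => f t / f (c * t))) :
    ∀ c ∈ Set.Ioo (0:ℝ) 1, IsCF (fun t => f t / f (c * t)) := by
  intro c hc
  have hnv := cf_nonvanish f a ha hf h
  obtain ⟨n0, hn0⟩ := exists_nat_gt (Real.log c / Real.log a)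
  set n : ℕ := n0 + 1 with hndef
  have hnpos : (0:ℝ) < n := by positivity
  have hla : Real.log a < 0 := Real.log_neg ha.1 ha.2
  have hn : Real.log c / Real.log a < n := lt_of_lt_of_le hn0 (by exact_mod_cast Nat.le_succ n0)
  set b : ℝ := c ^ (1/(n:ℝ)) with hbdef
  have hab : a < b := by
    rw [hbdef, Real.rpow_def_of_pos hc.1]
    rw [show a = Real.exp (Real.log a) from (Real.exp_log ha.1).symm]
    apply Real.exp_lt_exp.mpr
    have h1 : (n:ℝ) * Real.log a < Real.log c := (div_lt_iff_of_neg hla).mp hn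
    rw [one_div, ← div_eq_mul_inv, lt_div_iff₀ hnpos]
    linarith [h1]
  have hb1 : b < 1 := Real.rpow_lt_one hc.1.le hc.2 (by positivity)
  have hbn : b ^ n = c := by
    rw [hbdef, ← Real.rpow_natCast (c ^ (1/(n:ℝ))) n, ← Real.rpow_mul hc.1.le]
    have : (1/(n:ℝ)) * n = 1 := by field_simp
    rw [this, Real.rpow_one]
  have hbcf := h b ⟨hab, hb1⟩
  have key : ∀ k : ℕ, IsCF (fun t => f t / f (b ^ (k+1) * t)) := by
    intro k
    induction k with
    | zero => simpa [pow_one] using hbcf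
    | succ k ih =>
      have h2 := hbcf.comp_mul (b ^ (k+1))
      have := ih.mul h2
      have heq : (fun t => f t / f (b ^ (k+1+1) * t)) =
          fun t => (f t / f (b ^ (k+1) * t)) * (f (b ^ (k+1) * t) / f (b * (b ^ (k+1) * t))) := by
        funext t
        have e : b * (b ^ (k+1) * t) = b ^ (k+1+1) * t := by ring
        rw [e]
        have hB := hnv (b ^ (k+1) * t)
        have hD := hnv (b ^ (k+1+1) * t)
        field_simp
        exact (mul_div_cancel_right₀ _ (hnv _)).symm
      rw [heq]
      exact this
  have := key n0
  rw [show b ^ (n0 + 1) = c from hbn] at this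
  exact this
end

section
/- Let φ(s) = (1+s)^{-1/k} for a positive integer k, and p ∈ (0,1). Then P(s) = φ(φ⁻¹(s)/p) = s / (a - (a-1)s^k)^{1/k} with a = 1/p is a probability generating function (the Harris(a,k) distribution), i.e., its Maclaurin coefficients are nonnegative and sum to 1. -/
open MeasureTheory Set Filter

/-- s/(a - (a-1)s^k)^(1/k) with a = 1/p is the Harris(a,k) PGF. -/

noncomputable def hcoef (r : ℝ) : ℕ → ℝ
  | 0 => 1
  | m + 1 => hcoef r m * ((r + m) / (m + 1))

lemma hcoef_nonneg {r : ℝ} (hr : 0 ≤ r) (m : ℕ) : 0 ≤ hcoef r m := by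
  induction m with
  | zero => norm_num [hcoef]
  | succ n ih =>
    rw [hcoef]
    have h1 : (0:ℝ) ≤ (r + n) / (n + 1) := by positivity
    positivity

lemma hcoef_le_one {r : ℝ} (hr0 : 0 ≤ r) (hr1 : r ≤ 1) (m : ℕ) : hcoef r m ≤ 1 := by
  induction m with
  | zero => norm_num [hcoef]
  | succ n ih =>
    rw [hcoef]
    have h1 : (r + n) / (n + 1) ≤ 1 := by
      rw [div_le_one (by positivity)]
      linarith
    have h2 : (0:ℝ) ≤ (r + n) / (n + 1) := by positivity
    nlinarith [hcoef_nonneg hr0 n]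

lemma hcoef_rec (r : ℝ) (m : ℕ) :
    ((m : ℝ) + 1) * hcoef r (m + 1) = (r + m) * hcoef r m := by
  rw [hcoef]
  field_simp

lemma summable_hcoef {r : ℝ} (hr0 : 0 ≤ r) (hr1 : r ≤ 1) {x : ℝ} (hx : |x| < 1) :
    Summable (fun m : ℕ => hcoef r m * x ^ m) := by
  refine Summable.of_norm_bounded (summable_geometric_of_lt_one (abs_nonneg x) hx) fun m => ?_
  rw [norm_mul, norm_pow, Real.norm_eq_abs, Real.norm_eq_abs,
    abs_of_nonneg (hcoef_nonneg hr0 m)]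
  have h1 : (0:ℝ) ≤ |x| ^ m := by positivity
  nlinarith [hcoef_le_one hr0 hr1 m]

lemma summable_n_geo {x : ℝ} (hx : |x| < 1) :
    Summable (fun m : ℕ => (m : ℝ) * |x| ^ m) := by
  have := summable_pow_mul_geometric_of_norm_lt_one (R := ℝ) 1
    (r := |x|) (by rwa [Real.norm_eq_abs, abs_abs])
  simpa using this

lemma summable_hcoef_deriv {r : ℝ} (hr0 : 0 ≤ r) (hr1 : r ≤ 1) {x : ℝ} (hx : |x| < 1) :
    Summable (fun m : ℕ => (r + m) * hcoef r m * x ^ m) := by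
  have hgeo : Summable (fun m : ℕ => |x| ^ m + (m : ℝ) * |x| ^ m) :=
    (summable_geometric_of_lt_one (abs_nonneg x) hx).add (summable_n_geo hx)
  refine Summable.of_norm_bounded hgeo fun m => ?_
  rw [norm_mul, norm_mul, norm_pow, Real.norm_eq_abs, Real.norm_eq_abs, Real.norm_eq_abs,
    abs_of_nonneg (hcoef_nonneg hr0 m), abs_of_nonneg (by positivity : (0:ℝ) ≤ r + m)]
  have h1 : (0:ℝ) ≤ |x| ^ m := by positivity
  have h2 := hcoef_le_one hr0 hr1 m
  have h3 := hcoef_nonneg hr0 m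
  have h4 : (r + (m:ℝ)) * hcoef r m ≤ 1 + m := by nlinarith
  nlinarith [mul_le_mul_of_nonneg_right h4 h1]

lemma summable_hcoef_n {r : ℝ} (hr0 : 0 ≤ r) (hr1 : r ≤ 1) {x : ℝ} (hx : |x| < 1) :
    Summable (fun m : ℕ => (m : ℝ) * hcoef r m * x ^ m) := by
  refine Summable.of_norm_bounded (summable_n_geo hx) fun m => ?_
  rw [norm_mul, norm_mul, norm_pow, Real.norm_eq_abs, Real.norm_eq_abs, Real.norm_eq_abs,
    abs_of_nonneg (hcoef_nonneg hr0 m), abs_of_nonneg (Nat.cast_nonneg m : (0:ℝ) ≤ m)]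
  have h1 : (0:ℝ) ≤ |x| ^ m := by positivity
  have h2 := hcoef_le_one hr0 hr1 m
  have h3 := hcoef_nonneg hr0 m
  have h4 : ((m:ℝ)) * hcoef r m ≤ (m:ℝ) := by nlinarith [Nat.cast_nonneg (α := ℝ) m]
  nlinarith [mul_le_mul_of_nonneg_right h4 h1]

lemma hasDerivAt_hcSum {r : ℝ} (hr0 : 0 ≤ r) (hr1 : r ≤ 1) {x : ℝ} (hx : |x| < 1) :
    HasDerivAt (fun y : ℝ => ∑' m : ℕ, hcoef r m * y ^ m)
      (∑' m : ℕ, (r + m) * hcoef r m * x ^ m) x := by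
  set b : ℝ := (1 + |x|) / 2 with hb
  have hb0 : 0 < b := by positivity
  have hb1 : b < 1 := by rw [hb]; linarith
  have hxb : |x| < b := by rw [hb]; linarith [abs_nonneg x]
  set u : ℕ → ℝ := fun n => (n : ℝ) * b ^ (n - 1) with hu_def
  have hu : Summable u := by
    rw [← summable_nat_add_iff 1]
    have h1 : Summable (fun n : ℕ => (n : ℝ) * b ^ n) := by
      have := summable_pow_mul_geometric_of_norm_lt_one (R := ℝ) 1
        (r := b) (by rwa [Real.norm_eq_abs, abs_of_nonneg hb0.le])
      simpa using this
    have h2 : Summable (fun n : ℕ => b ^ n) := summable_geometric_of_lt_one hb0.le hb1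
    refine (h1.add h2).congr fun n => ?_
    simp [hu_def, Nat.add_sub_cancel]
    push_cast
    ring
  have hbound : ∀ (n : ℕ) (y : ℝ), y ∈ Metric.ball (0:ℝ) b →
      ‖hcoef r n * ((n : ℝ) * y ^ (n - 1))‖ ≤ u n := by
    intro n y hy
    have hy' : |y| ≤ b := le_of_lt (by simpa [Real.norm_eq_abs] using mem_ball_zero_iff.mp hy)
    rw [norm_mul, norm_mul, norm_pow, Real.norm_eq_abs, Real.norm_eq_abs, Real.norm_eq_abs,
      abs_of_nonneg (hcoef_nonneg hr0 n), abs_of_nonneg (Nat.cast_nonneg n : (0:ℝ) ≤ n)]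
    have h1 : |y| ^ (n - 1) ≤ b ^ (n - 1) := pow_le_pow_left₀ (abs_nonneg y) hy' _
    have h2 := hcoef_le_one hr0 hr1 n
    have h3 := hcoef_nonneg hr0 n
    have h4 : (0:ℝ) ≤ (n : ℝ) := Nat.cast_nonneg n
    have h5 : (0:ℝ) ≤ |y| ^ (n - 1) := by positivity
    calc hcoef r n * ((n:ℝ) * |y| ^ (n-1)) ≤ 1 * ((n:ℝ) * b ^ (n-1)) := by
          apply mul_le_mul h2 _ (by positivity) zero_le_one
          exact mul_le_mul_of_nonneg_left h1 h4
      _ = u n := by rw [hu_def]; ring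
  have H := hasDerivAt_tsum_of_isPreconnected hu (Metric.isOpen_ball)
    ((convex_ball (0:ℝ) b).isPreconnected)
    (g := fun n y => hcoef r n * y ^ n)
    (g' := fun n y => hcoef r n * ((n : ℝ) * y ^ (n - 1)))
    (fun n y _ => (hasDerivAt_pow n y).const_mul _)
    hbound
    (mem_ball_zero_iff.mpr (by rwa [Real.norm_eq_abs]))
    (summable_hcoef hr0 hr1 hx)
    (mem_ball_zero_iff.mpr (by rwa [Real.norm_eq_abs]))
  have hsum : Summable (fun n : ℕ => hcoef r n * ((n : ℝ) * x ^ (n - 1))) := by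
    refine Summable.of_norm_bounded hu fun n => hbound n x
      (mem_ball_zero_iff.mpr (by rwa [Real.norm_eq_abs]))
  have hEq : (∑' n : ℕ, hcoef r n * ((n : ℝ) * x ^ (n - 1)))
      = ∑' m : ℕ, (r + m) * hcoef r m * x ^ m := by
    rw [Summable.tsum_eq_zero_add hsum]
    simp only [Nat.cast_zero, zero_mul, mul_zero, zero_add]
    refine tsum_congr fun m => ?_
    have h := hcoef_rec r m
    have hmm : (m + 1) - 1 = m := by omega
    rw [hmm]
    push_cast
    calc hcoef r (m+1) * (((m:ℝ)+1) * x ^ m) = (((m:ℝ)+1) * hcoef r (m+1)) * x ^ m := by ring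
      _ = (r + m) * hcoef r m * x ^ m := by rw [h]
  rwa [hEq] at H

lemma hc_deriv_identity {r : ℝ} (hr0 : 0 ≤ r) (hr1 : r ≤ 1) {x : ℝ} (hx : |x| < 1) :
    (1 - x) * (∑' m : ℕ, (r + m) * hcoef r m * x ^ m)
      = r * ∑' m : ℕ, hcoef r m * x ^ m := by
  have hD := summable_hcoef_deriv hr0 hr1 hx
  have hN := summable_hcoef_n hr0 hr1 hx
  have hshift : x * (∑' m : ℕ, (r + m) * hcoef r m * x ^ m)
      = ∑' m : ℕ, (m : ℝ) * hcoef r m * x ^ m := by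
    rw [← tsum_mul_left, Summable.tsum_eq_zero_add hN]
    simp only [Nat.cast_zero, zero_mul, zero_add]
    refine tsum_congr fun m => ?_
    have h := hcoef_rec r m
    push_cast
    calc x * ((r + m) * hcoef r m * x ^ m) = ((r + m) * hcoef r m) * x ^ (m + 1) := by ring
      _ = (((m:ℝ)+1) * hcoef r (m+1)) * x ^ (m+1) := by rw [h]
      _ = ((m:ℝ)+1) * hcoef r (m+1) * x ^ (m+1) := by ring
  calc (1 - x) * (∑' m : ℕ, (r + m) * hcoef r m * x ^ m)
      = (∑' m : ℕ, (r + m) * hcoef r m * x ^ m)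
        - x * (∑' m : ℕ, (r + m) * hcoef r m * x ^ m) := by ring
    _ = (∑' m : ℕ, (r + m) * hcoef r m * x ^ m)
        - ∑' m : ℕ, (m : ℝ) * hcoef r m * x ^ m := by rw [hshift]
    _ = ∑' m : ℕ, ((r + m) * hcoef r m * x ^ m - (m : ℝ) * hcoef r m * x ^ m) :=
        (Summable.tsum_sub hD hN).symm
    _ = ∑' m : ℕ, r * (hcoef r m * x ^ m) := tsum_congr fun m => by ring
    _ = r * ∑' m : ℕ, hcoef r m * x ^ m := tsum_mul_left

lemma hc_sum_mul {r : ℝ} (hr0 : 0 ≤ r) (hr1 : r ≤ 1) {x : ℝ} (hx0 : 0 ≤ x) (hx1 : x < 1) :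
    (∑' m : ℕ, hcoef r m * x ^ m) * (1 - x) ^ r = 1 := by
  set F : ℝ → ℝ := fun y => (∑' m : ℕ, hcoef r m * y ^ m) * (1 - y) ^ r with hF
  have hderiv : ∀ y ∈ Set.Ico (0:ℝ) 1, HasDerivAt F 0 y := by
    intro y hy
    have hy1 : |y| < 1 := abs_lt.mpr ⟨by linarith [hy.1, hy.2], hy.2⟩
    have h1y : (0:ℝ) < 1 - y := by linarith [hy.2]
    have hS := hasDerivAt_hcSum hr0 hr1 hy1
    have hR : HasDerivAt (fun z : ℝ => (1 - z) ^ r) (-(r * (1 - y) ^ (r - 1))) y := by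
      have h := Real.hasDerivAt_rpow_const (x := 1 - y) (p := r) (Or.inl h1y.ne')
      have h2 : HasDerivAt (fun z : ℝ => 1 - z) (-1) y := (hasDerivAt_id y).const_sub 1
      have h3 := h.comp y h2
      exact h3.congr_deriv (by ring)
    have hmul := hS.mul hR
    have hpow : (1 - y) ^ (r - 1) * (1 - y) = (1 - y) ^ r := by
      have h := (Real.rpow_add h1y (r - 1) 1).symm
      simpa using h
    have hkey := hc_deriv_identity hr0 hr1 hy1
    have hzero : (∑' m : ℕ, (r + m) * hcoef r m * y ^ m) * (1 - y) ^ r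
        + (∑' m : ℕ, hcoef r m * y ^ m) * (-(r * (1 - y) ^ (r - 1))) = 0 := by
      rw [← hpow]
      have : (∑' m : ℕ, (r + m) * hcoef r m * y ^ m) * ((1 - y) ^ (r-1) * (1 - y))
          + (∑' m : ℕ, hcoef r m * y ^ m) * (-(r * (1 - y) ^ (r-1)))
          = (1 - y) ^ (r-1) * ((1 - y) * (∑' m : ℕ, (r + m) * hcoef r m * y ^ m)
            - r * ∑' m : ℕ, hcoef r m * y ^ m) := by ring
      rw [this, hkey, sub_self, mul_zero]
    rw [hF]
    convert hmul using 1
    · rfl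
    · rfl
    · rfl
    rw [← hpow]
    linear_combination (-((1 - y) ^ (r - 1))) * hkey
  have hcont : ContinuousOn F (Set.Icc 0 x) := fun y hy =>
    (hderiv y ⟨hy.1, lt_of_le_of_lt hy.2 hx1⟩).continuousAt.continuousWithinAt
  have hconst := constant_of_has_deriv_right_zero hcont
    (fun y hy => (hderiv y ⟨hy.1, lt_of_lt_of_le hy.2 hx1.le⟩).hasDerivWithinAt)
    x (Set.right_mem_Icc.mpr hx0)
  have hS0 : (∑' m : ℕ, hcoef r m * (0:ℝ) ^ m) = 1 := by
    rw [tsum_eq_single 0 (fun m hm => by simp [zero_pow hm])]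
    norm_num [hcoef]
  have hF0 : F 0 = 1 := by
    rw [hF]
    simp only [sub_zero, Real.one_rpow, mul_one]
    exact hS0
  calc (∑' m : ℕ, hcoef r m * x ^ m) * (1 - x) ^ r = F x := by rw [hF]
    _ = F 0 := hconst
    _ = 1 := hF0

/-- STATEMENT 15 aux done. -/
theorem harris_is_pgf (k : ℕ) (hk : 0 < k) (p : ℝ) (hp : p ∈ Set.Ioo (0:ℝ) 1) :
    IsPGF (fun s => s / (1 / p - (1 / p - 1) * s ^ k) ^ ((1 : ℝ) / k)) := by
  obtain ⟨hp0, hp1⟩ := hp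
  have hk0 : (0:ℝ) < k := by exact_mod_cast hk
  have hk1 : (1:ℝ) ≤ k := by exact_mod_cast hk
  set r : ℝ := 1 / (k : ℝ) with hr
  have hr0 : 0 < r := by positivity
  have hr1 : r ≤ 1 := by rw [hr, div_le_one hk0]; linarith
  have hc0 : (0:ℝ) ≤ 1 - p := by linarith
  have hc1 : (1:ℝ) - p < 1 := by linarith
  set f : ℕ → ℝ := fun m => p ^ r * (1 - p) ^ m * hcoef r m with hfdef
  have hi : Function.Injective (fun m : ℕ => k * m + 1) := by
    intro a b h
    simp only [add_left_inj] at h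
    exact Nat.eq_of_mul_eq_mul_left hk h
  have hzero : ∀ n, n ∉ Set.range (fun m : ℕ => k * m + 1) →
      Function.extend (fun m : ℕ => k * m + 1) f 0 n = 0 := fun n hn => by
    rw [Function.extend_apply' _ _ _ (by simpa using hn)]
    rfl
  refine ⟨Function.extend (fun m : ℕ => k * m + 1) f 0, ?_, ?_, ?_⟩
  · intro n
    by_cases h : n ∈ Set.range (fun m : ℕ => k * m + 1)
    · obtain ⟨m, rfl⟩ := h
      rw [hi.extend_apply]
      have h1 := hcoef_nonneg hr0.le m
      have h2 : (0:ℝ) < p ^ r := Real.rpow_pos_of_pos hp0 r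
      simp only [hfdef]
      positivity
    · rw [hzero n h]
  · have hsupp1 : Function.support (Function.extend (fun m : ℕ => k * m + 1) f 0)
        ⊆ Set.range (fun m : ℕ => k * m + 1) := fun n hn => by
      by_contra h; exact hn (hzero n h)
    rw [← hi.tsum_eq hsupp1]
    have happ : ∀ m, Function.extend (fun m : ℕ => k * m + 1) f 0 (k * m + 1) = f m :=
      fun m => hi.extend_apply f 0 m
    rw [tsum_congr happ]
    have h := hc_sum_mul hr0.le hr1 (x := 1 - p) hc0 hc1
    have h' : (1:ℝ) - (1 - p) = p := by ring
    rw [h'] at h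
    calc ∑' m : ℕ, f m = ∑' m : ℕ, p ^ r * (hcoef r m * (1 - p) ^ m) :=
          tsum_congr fun m => by rw [hfdef]; ring
      _ = p ^ r * ∑' m : ℕ, hcoef r m * (1 - p) ^ m := tsum_mul_left
      _ = 1 := by rw [mul_comm]; exact h
  · intro s hs
    obtain ⟨hs0, hs1⟩ := hs
    have hsk : s ^ k ≤ 1 := pow_le_one₀ hs0 hs1
    have hsk0 : 0 ≤ s ^ k := pow_nonneg hs0 k
    have hx0 : 0 ≤ (1 - p) * s ^ k := by nlinarith
    have hx1 : (1 - p) * s ^ k < 1 := by nlinarith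
    have h1x : 0 < 1 - (1 - p) * s ^ k := by linarith
    have hSx := hc_sum_mul hr0.le hr1 hx0 hx1
    have hsupp2 : (Function.support fun n =>
        Function.extend (fun m : ℕ => k * m + 1) f 0 n * s ^ n)
        ⊆ Set.range (fun m : ℕ => k * m + 1) := fun n hn => by
      by_contra h
      refine hn ?_
      show Function.extend (fun m : ℕ => k * m + 1) f 0 n * s ^ n = 0
      rw [hzero n h, zero_mul]
    show s / (1 / p - (1 / p - 1) * s ^ k) ^ r = _
    rw [← hi.tsum_eq hsupp2]
    have hterm : ∀ m, Function.extend (fun m : ℕ => k * m + 1) f 0 (k * m + 1) * s ^ (k * m + 1)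
        = p ^ r * s * (hcoef r m * ((1 - p) * s ^ k) ^ m) := by
      intro m
      rw [hi.extend_apply, hfdef]
      show p ^ r * (1 - p) ^ m * hcoef r m * s ^ (k * m + 1) = _
      rw [pow_succ, pow_mul, mul_pow]
      ring
    rw [tsum_congr hterm, tsum_mul_left]
    have hS : (∑' m : ℕ, hcoef r m * ((1 - p) * s ^ k) ^ m)
        = ((1 - (1 - p) * s ^ k) ^ r)⁻¹ := eq_inv_of_mul_eq_one_left hSx
    have hbase : 1 / p - (1 / p - 1) * s ^ k = (1 - (1 - p) * s ^ k) / p := by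
      field_simp
    have hpr : 0 < p ^ r := Real.rpow_pos_of_pos hp0 r
    have hxr : 0 < (1 - (1 - p) * s ^ k) ^ r := Real.rpow_pos_of_pos h1x r
    rw [hbase, Real.div_rpow h1x.le hp0.le, div_div_eq_mul_div, hS]
    field_simp
end
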